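/- With the block matrices A₁, A₂, as in the single-vertex-join determinant identity, and for a scalar β, let Â_β be with its middle diagonal entry a₁⁰+a₂⁰ replaced by a₁⁰+a₂⁰+β. Then det Â_β = det A₁ · det A₂⁰ + det A₁⁰ · det A₂ + β · det A₁⁰ · det A₂⁰. -/

import Mathlib

open Matrix

theorem single_vertex_join_det_robin (m n : ℕ) (β : ℂ)
    (A₁0 : Matrix (Fin m) (Fin m) ℂ) (a₁ : Matrix (Fin m) Unit ℂ) (a₁0 : ℂ)
    (A₂0 : Matrix (Fin n) (Fin n) ℂ) (a₂ : Matrix (Fin n) Unit ℂ) (a₂0 : ℂ)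
    (A₁ : Matrix (Fin m ⊕ Unit) (Fin m ⊕ Unit) ℂ)
    (A₂ : Matrix (Unit ⊕ Fin n) (Unit ⊕ Fin n) ℂ)
    (Ahatβ : Matrix ((Fin m ⊕ Unit) ⊕ Fin n) ((Fin m ⊕ Unit) ⊕ Fin n) ℂ)
    (hA₁ : A₁ = fromBlocks A₁0 a₁ a₁ᴴ (Matrix.of fun _ _ => a₁0))
    (hA₂ : A₂ = fromBlocks (Matrix.of fun _ _ => a₂0) a₂ᴴ a₂ A₂0)
    (hAhatβ : Ahatβ = fromBlocks
        (fromBlocks A₁0 a₁ a₁ᴴ (Matrix.of fun _ _ => a₁0 + a₂0 + β))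
        (fromRows 0 a₂ᴴ) (fromCols 0 a₂) A₂0) :
    Ahatβ.det = A₁.det * A₂0.det + A₁0.det * A₂.det + β * A₁0.det * A₂0.det := by
  subst hA₁ hA₂ hAhatβ
  set M : Matrix ((Fin m ⊕ Unit) ⊕ Fin n) ((Fin m ⊕ Unit) ⊕ Fin n) ℂ :=
    fromBlocks (fromBlocks A₁0 a₁ a₁ᴴ (Matrix.of fun _ _ => a₁0 + a₂0 + β))
      (fromRows 0 a₂ᴴ) (fromCols 0 a₂) A₂0 with hM
  set mid : (Fin m ⊕ Unit) ⊕ Fin n := Sum.inl (Sum.inr ()) with hmid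
  set r₁ : ((Fin m ⊕ Unit) ⊕ Fin n) → ℂ :=
    Sum.elim (Sum.elim (fun j => a₁ᴴ () j) (fun _ => a₁0)) 0 with hr₁
  set r₂ : ((Fin m ⊕ Unit) ⊕ Fin n) → ℂ :=
    Sum.elim (Sum.elim 0 (fun _ => a₂0)) (fun j => a₂ᴴ () j) with hr₂
  set r₃ : ((Fin m ⊕ Unit) ⊕ Fin n) → ℂ :=
    Sum.elim (Sum.elim 0 (fun _ => β)) 0 with hr₃
  have hrow : M = updateRow M mid (r₁ + r₂ + r₃) := by
    have : r₁ + r₂ + r₃ = M mid := by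
      funext j
      rcases j with (j | j) | j <;>
        simp [hM, hr₁, hr₂, hr₃, hmid, fromBlocks, Pi.add_apply]
    rw [this, updateRow_eq_self]
  have hdet : M.det = (updateRow M mid r₁).det + (updateRow M mid r₂).det
      + (updateRow M mid r₃).det := by
    conv_lhs => rw [hrow]
    rw [det_updateRow_add, det_updateRow_add]
  -- first piece
  have h1 : updateRow M mid r₁ =
      fromBlocks (fromBlocks A₁0 a₁ a₁ᴴ (Matrix.of fun _ _ => a₁0)) 0
        (fromCols 0 a₂) A₂0 := by
    ext i j
    rcases i with (i | i) | i <;> rcases j with (j | j) | j <;>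
      simp [hM, hr₁, hmid, fromBlocks, updateRow_apply, Matrix.fromRows] <;> rfl
  have hd1 : (updateRow M mid r₁).det =
      (fromBlocks A₁0 a₁ a₁ᴴ (Matrix.of fun _ _ => a₁0)).det * A₂0.det := by
    rw [h1, det_fromBlocks_zero₁₂]
  -- second piece: reindex with sum associativity
  have h2 : (updateRow M mid r₂).det = A₁0.det *
      (fromBlocks (Matrix.of fun _ _ => a₂0) a₂ᴴ a₂ A₂0).det := by
    have hb : updateRow M mid r₂ =
        (fromBlocks A₁0 (fromCols a₁ 0) 0
          (fromBlocks (Matrix.of fun _ _ => a₂0) a₂ᴴ a₂ A₂0)).submatrix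
          (Equiv.sumAssoc (Fin m) Unit (Fin n)) (Equiv.sumAssoc (Fin m) Unit (Fin n)) := by
      ext i j
      rcases i with (i | i) | i <;> rcases j with (j | j) | j <;>
        simp [hM, hr₂, hmid, fromBlocks, updateRow_apply, Matrix.fromRows,
          Matrix.fromCols, Equiv.sumAssoc] <;> rfl
    rw [hb, det_submatrix_equiv_self, det_fromBlocks_zero₂₁]
  -- third piece
  have h3 : updateRow M mid r₃ =
      fromBlocks (fromBlocks A₁0 a₁ 0 (Matrix.of fun _ _ => β)) 0
        (fromCols 0 a₂) A₂0 := by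
    ext i j
    rcases i with (i | i) | i <;> rcases j with (j | j) | j <;>
      simp [hM, hr₃, hmid, fromBlocks, updateRow_apply, Matrix.fromRows] <;> rfl
  have hd3 : (updateRow M mid r₃).det = A₁0.det * β * A₂0.det := by
    rw [h3, det_fromBlocks_zero₁₂, det_fromBlocks_zero₂₁]
    simp [Matrix.det_unique]
  rw [hdet, hd1, h2, hd3]
  ring
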